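/- For any integrable nonnegative function g on a measure space with distribution function F(y) = m({g > y}), one has y·F(y) ≤ ∫ g dm for every y > 0 (Chebyshev/Markov inequality), and consequently ∫₀^∞ ln(yF(y)) F(y) dy ≤ (∫ g dm) ln(∫ g dm) provided the integrals converge. -/

import Mathlib

open MeasureTheory

/-- Chebyshev/Markov inequality `y·F(y) ≤ ∫ g dm` for the distribution
function `F(y) = m({g > y})` of a nonnegative integrable `g`, and the
consequent entropy comparison
`∫₀^∞ ln(y F(y)) F(y) dy ≤ (∫ g dm) ln(∫ g dm)` provided the integral
converges (§4.4). -/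
theorem stmt_16 {α : Type*} [MeasurableSpace α] (m : Measure α)
    (g : α → ℝ) (hgnn : ∀ x, 0 ≤ g x) (hgint : Integrable g m)
    (hgmeas : Measurable g)
    (F : ℝ → ℝ) (hF : ∀ y, F y = (m {x | y < g x}).toReal) :
    (∀ y : ℝ, 0 < y → y * F y ≤ ∫ x, g x ∂m) ∧
    (IntegrableOn (fun y => F y * Real.log (y * F y)) (Set.Ioi 0) →
      (∫ y in Set.Ioi (0:ℝ), F y * Real.log (y * F y)) ≤
        (∫ x, g x ∂m) * Real.log (∫ x, g x ∂m)) := by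
  have hFnn : ∀ y, 0 ≤ F y := fun y => (hF y) ▸ ENNReal.toReal_nonneg
  have markov : ∀ y : ℝ, 0 < y → y * F y ≤ ∫ x, g x ∂m := by
    intro y hy
    rw [hF]
    calc y * (m {x | y < g x}).toReal
        ≤ y * (m {x | y ≤ g x}).toReal := by
          refine mul_le_mul_of_nonneg_left ?_ hy.le
          exact ENNReal.toReal_mono (hgint.measure_ge_lt_top hy).ne
            (measure_mono fun x (hx : y < g x) => (hx.le : x ∈ {x | y ≤ g x}))
      _ ≤ ∫ x, g x ∂m := mul_meas_ge_le_integral_of_nonneg (ae_of_all _ hgnn) hgint y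
  have hI : ∫ x, g x ∂m = ∫ t in Set.Ioi 0, F t := by
    rw [hgint.integral_eq_integral_meas_lt (ae_of_all _ hgnn)]
    exact setIntegral_congr_fun measurableSet_Ioi (fun t _ => (hF t).symm)
  have hFmeas : Measurable F := by
    have hA : Antitone fun t : ℝ => m {x | t < g x} :=
      fun _ _ hst => measure_mono fun _ h => lt_of_le_of_lt hst h
    have h : Measurable fun t : ℝ => (m {x | t < g x}).toReal :=
      hA.measurable.ennreal_toReal
    have : F = fun t => (m {x | t < g x}).toReal := funext hF
    rw [this]; exact h
  have hFint : IntegrableOn F (Set.Ioi 0) := by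
    refine ⟨hFmeas.aestronglyMeasurable.restrict, ?_⟩
    rw [hasFiniteIntegral_iff_ofReal (ae_of_all _ fun y => hFnn y)]
    have key := lintegral_eq_lintegral_meas_lt m (ae_of_all _ hgnn) hgmeas.aemeasurable
    have heq : ∫⁻ t in Set.Ioi 0, ENNReal.ofReal (F t)
        = ∫⁻ t in Set.Ioi 0, m {a | t < g a} := by
      refine setLIntegral_congr_fun measurableSet_Ioi (fun t ht => ?_)
      rw [hF, ENNReal.ofReal_toReal (hgint.measure_gt_lt_top ht).ne]
    rw [heq, ← key]
    exact hgint.lintegral_lt_top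
  refine ⟨markov, fun hint => ?_⟩
  have hineq : ∀ y ∈ Set.Ioi (0:ℝ), F y * Real.log (y * F y) ≤ F y * Real.log (∫ x, g x ∂m) := by
    intro y hy
    rcases eq_or_lt_of_le (hFnn y) with h | h
    · simp [← h]
    · exact mul_le_mul_of_nonneg_left
        (Real.log_le_log (mul_pos hy h) (markov y hy)) (hFnn y)
  calc (∫ y in Set.Ioi (0:ℝ), F y * Real.log (y * F y))
      ≤ ∫ y in Set.Ioi (0:ℝ), F y * Real.log (∫ x, g x ∂m) :=
        setIntegral_mono_on hint (hFint.mul_const _) measurableSet_Ioi hineq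
    _ = (∫ y in Set.Ioi (0:ℝ), F y) * Real.log (∫ x, g x ∂m) := integral_mul_const _ _
    _ = (∫ x, g x ∂m) * Real.log (∫ x, g x ∂m) := by rw [← hI]
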